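/- For nonzero complex q with q² ≠ 1 and any natural number k, the quantity α_{k+1,m} = q^{γ+k-m+1/2} (q^m - (-1)^m)/(q - q^{-1}) - q^{-(γ+k-m+1/2)} (q^{-m} - (-1)^m)/(q - q^{-1}) is nonzero for every integer m with 1 ≤ m ≤ k+1, provided q is a positive real number different from 1 and γ > 0 is real. -/

import Mathlib

/-- The Fischer decomposition coefficients
`α_{k+1,m} = q^{γ+k-m+1/2}(q^m - (-1)^m)/(q-q⁻¹) - q^{-(γ+k-m+1/2)}(q^{-m} - (-1)^m)/(q-q⁻¹)`
are nonzero for `1 ≤ m ≤ k+1`, where `q` is a positive real number different from `1`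
and `γ > 0`. -/
theorem alpha_ne_zero (q γ : ℝ) (hq0 : 0 < q) (hq1 : q ≠ 1) (hγ : 0 < γ)
    (k m : ℕ) (hm1 : 1 ≤ m) (hm2 : m ≤ k + 1) :
    q ^ (γ + (k : ℝ) - (m : ℝ) + 1/2) * ((q ^ (m : ℝ) - (-1 : ℝ) ^ m) / (q - q⁻¹))
      - q ^ (-(γ + (k : ℝ) - (m : ℝ) + 1/2)) * ((q ^ (-(m : ℝ)) - (-1 : ℝ) ^ m) / (q - q⁻¹))
      ≠ 0 := by
  have hq : q ≠ 0 := ne_of_gt hq0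
  set t : ℝ := γ + (k : ℝ) - (m : ℝ) + 1/2 with ht
  have hd : q - q⁻¹ ≠ 0 := by
    intro h
    have h2 : q = q⁻¹ := sub_eq_zero.mp h
    have h3 : q * q = 1 := by
      nlinarith [mul_inv_cancel₀ hq, h2]
    rcases mul_self_eq_one_iff.mp h3 with h4 | h4
    · exact hq1 h4
    · linarith
  have hg : Function.Injective (fun u : ℝ => q ^ u - q ^ (-u)) := by
    rcases lt_or_gt_of_ne hq1 with h1 | h1
    · refine StrictAnti.injective (fun a b hab => ?_)
      show q ^ b - q ^ (-b) < q ^ a - q ^ (-a)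
      have h2 : q ^ b < q ^ a := Real.rpow_lt_rpow_of_exponent_gt hq0 h1 hab
      have h3 : q ^ (-a) < q ^ (-b) :=
        Real.rpow_lt_rpow_of_exponent_gt hq0 h1 (neg_lt_neg hab)
      linarith
    · refine StrictMono.injective (fun a b hab => ?_)
      show q ^ a - q ^ (-a) < q ^ b - q ^ (-b)
      have h2 : q ^ a < q ^ b := Real.rpow_lt_rpow_of_exponent_lt h1 hab
      have h3 : q ^ (-b) < q ^ (-a) :=
        Real.rpow_lt_rpow_of_exponent_lt h1 (neg_lt_neg hab)
      linarith
  have e1 : q ^ (t + (m : ℝ)) = q ^ t * q ^ (m : ℝ) := Real.rpow_add hq0 _ _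
  have e2 : q ^ (-(t + (m : ℝ))) = q ^ (-t) * q ^ (-(m : ℝ)) := by
    rw [neg_add, Real.rpow_add hq0]
  have key : q ^ t * ((q ^ (m : ℝ) - (-1 : ℝ) ^ m) / (q - q⁻¹))
      - q ^ (-t) * ((q ^ (-(m : ℝ)) - (-1 : ℝ) ^ m) / (q - q⁻¹))
      = ((q ^ (t + (m : ℝ)) - q ^ (-(t + (m : ℝ)))) - (-1 : ℝ) ^ m * (q ^ t - q ^ (-t)))
        / (q - q⁻¹) := by
    rw [e1, e2]; ring
  rw [key]
  refine div_ne_zero ?_ hd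
  intro h
  rcases Nat.even_or_odd m with hpar | hpar
  · rw [hpar.neg_one_pow, one_mul] at h
    have h5 : (fun u : ℝ => q ^ u - q ^ (-u)) (t + (m : ℝ))
        = (fun u : ℝ => q ^ u - q ^ (-u)) t := by dsimp only; linarith
    have h6 : t + (m : ℝ) = t := hg h5
    have h7 : (m : ℝ) = 0 := by linarith
    have : m = 0 := Nat.cast_eq_zero.mp h7
    omega
  · rw [hpar.neg_one_pow] at h
    have h5 : (fun u : ℝ => q ^ u - q ^ (-u)) (t + (m : ℝ))
        = (fun u : ℝ => q ^ u - q ^ (-u)) (-t) := by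
      dsimp only; rw [neg_neg]; linarith
    have h6 : t + (m : ℝ) = -t := hg h5
    have hmk : (m : ℝ) ≤ (k : ℝ) + 1 := by exact_mod_cast hm2
    have hm0 : (1 : ℝ) ≤ (m : ℝ) := by exact_mod_cast hm1
    rw [ht] at h6
    linarith
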